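/- (Fermat's descent result) There are no positive integers x, y, z with y² = x⁴ − z⁴. -/

import Mathlib

lemma fd_sq_pos {a b c : ℤ} (h : IsCoprime a b) (heq : a * b = c ^ 2) (ha : 0 < a) :
    ∃ p : ℤ, 0 < p ∧ a = p ^ 2 := by
  obtain ⟨p, hp | hp⟩ := Int.sq_of_isCoprime h heq
  · have hp0 : p ≠ 0 := by rintro rfl; simp at hp; omega
    exact ⟨|p|, abs_pos.2 hp0, by rw [sq_abs]; exact hp⟩
  · exfalso; nlinarith [sq_nonneg p]

lemma fd_zmod16 : ∀ a b y : ZMod 16, (2*b+1)^4 + y^2 ≠ (2*a)^4 := by decide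

lemma fd_odd_sq {s A : ℤ} (h : s ^ 2 = 2 * A + 1) : Odd s := by
  rcases Int.even_or_odd s with ⟨r, rfl⟩ | h'
  · exfalso
    have hdvd : (2:ℤ) ∣ 2 * A + 1 := ⟨2 * (r * r), by linear_combination -h⟩
    omega
  · exact h'

set_option maxHeartbeats 1000000 in
lemma fd_main : ∀ N : ℕ, ∀ x y z : ℤ, x.natAbs ≤ N → 0 < x → 0 < y → 0 < z →
    z ^ 4 + y ^ 2 = x ^ 4 → False := by
  intro N
  induction N with
  | zero =>
    intro x y z hN hx hy hz h
    have h0 : x.natAbs = 0 := by omega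
    have : x = 0 := Int.natAbs_eq_zero.mp h0
    omega
  | succ N ih =>
    intro x y z hN hx hy hz h
    rcases Nat.lt_or_ge (Int.gcd x z) 2 with hg2 | hg2
    · -- gcd = 1
      have hgpos : 0 < Int.gcd x z := Int.gcd_pos_of_ne_zero_left z (by omega)
      have hg1 : Int.gcd x z = 1 := by omega
      have hco : IsCoprime x z := Int.isCoprime_iff_gcd_eq_one.mpr hg1
      have hx4 : z ^ 4 < x ^ 4 := by nlinarith
      have hzx : z < x := lt_of_pow_lt_pow_left₀ 4 hx.le hx4
      have hz2lt : z ^ 2 < x ^ 2 := by nlinarith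
      rcases Int.even_or_odd z with hze | hzo
      · -- z even, so x odd
        have hxodd : Odd x := by
          rcases Int.even_or_odd x with hxe | hxo
          · exfalso
            have h2 : IsUnit (2 : ℤ) := hco.isUnit_of_dvd' hxe.two_dvd hze.two_dvd
            rw [Int.isUnit_iff] at h2; omega
          · exact hxo
        obtain ⟨k, hk⟩ := hxodd
        obtain ⟨l, hl⟩ := hze
        have hApos : (0:ℤ) < x ^ 2 - z ^ 2 := by linarith
        have hBpos : (0:ℤ) < x ^ 2 + z ^ 2 := by positivity
        have hAodd : x ^ 2 - z ^ 2 = 2 * (2*k^2 + 2*k - 2*l^2) + 1 := by rw [hk, hl]; ring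
        have hAB : (x ^ 2 - z ^ 2) * (x ^ 2 + z ^ 2) = y ^ 2 := by linear_combination -h
        obtain ⟨u, v, huv⟩ := hco.pow (n := 2) (m := 2)
        have h2eq : (u - v) * (x ^ 2 - z ^ 2) + (u + v) * (x ^ 2 + z ^ 2) = 2 := by
          linear_combination 2 * huv
        have hcoAB : IsCoprime (x ^ 2 - z ^ 2) (x ^ 2 + z ^ 2) :=
          ⟨-(2*k^2 + 2*k - 2*l^2) * (u - v) + 1, -(2*k^2 + 2*k - 2*l^2) * (u + v), by
            linear_combination (-(2*k^2 + 2*k - 2*l^2)) * h2eq + hAodd⟩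
        obtain ⟨s, hs, hAs⟩ := fd_sq_pos hcoAB hAB hApos
        obtain ⟨t, ht, hBt⟩ := fd_sq_pos (c := y) hcoAB.symm (by linear_combination hAB) hBpos
        have hz2pos : (0:ℤ) < z ^ 2 := by positivity
        have hst2 : s ^ 2 < t ^ 2 := by linarith
        have hst : s < t := lt_of_pow_lt_pow_left₀ 2 ht.le hst2
        have hsodd : Odd s := fd_odd_sq (A := 2*k^2 + 2*k - 2*l^2) (by linarith)
        have hBodd : x ^ 2 + z ^ 2 = 2 * (2*k^2 + 2*k + 2*l^2) + 1 := by rw [hk, hl]; ring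
        have htodd : Odd t := fd_odd_sq (A := 2*k^2 + 2*k + 2*l^2) (by linarith)
        obtain ⟨σ, hσ⟩ := hsodd
        obtain ⟨τ, hτ⟩ := htodd
        set p : ℤ := τ - σ with hpdef
        set q : ℤ := τ + σ + 1 with hqdef
        have hp_def : t - s = 2 * p := by omega
        have hq_def : t + s = 2 * q := by omega
        have hppos : 0 < p := by omega
        have hqpos : 0 < q := by omega
        have h4x : 4 * (p ^ 2 + q ^ 2) = 4 * x ^ 2 := by
          linear_combination (-(t - s + 2*p)) * hp_def - (t + s + 2*q) * hq_def
            - 2 * hAs - 2 * hBt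
        have hpq_x : p ^ 2 + q ^ 2 = x ^ 2 := by linarith
        have hts : (t - s) * (t + s) = 2 * z ^ 2 := by linear_combination hAs - hBt
        have h4pq : (2*p) * (2*q) = 2 * z ^ 2 := by rw [← hp_def, ← hq_def]; exact hts
        have hz2l : z ^ 2 = 4 * l ^ 2 := by rw [hl]; ring
        have hpq8 : 4 * (p * q) = 8 * l ^ 2 := by linear_combination h4pq + 2 * hz2l
        have hpql : p * q = 2 * l ^ 2 := by linarith
        obtain ⟨u2, v2, huv2⟩ := hcoAB
        have hcost : IsCoprime s t :=
          ⟨u2 * s, v2 * t, by linear_combination huv2 - u2 * hAs - v2 * hBt⟩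
        obtain ⟨u3, v3, huv3⟩ := hcost
        have hs_pq : s = q - p := by omega
        have ht_pq : t = p + q := by omega
        have hcopq : IsCoprime p q :=
          ⟨v3 - u3, u3 + v3, by linear_combination huv3 - u3 * hs_pq - v3 * ht_pq⟩
        have htrip : PythagoreanTriple p q x := by
          have : p * p + q * q = x * x := by linear_combination hpq_x
          exact this
        have hgcdpq : Int.gcd p q = 1 := Int.isCoprime_iff_gcd_eq_one.mp hcopq
        obtain ⟨m, n, hmn1, hmn2, hmn3, -⟩ :=
          PythagoreanTriple.coprime_classification.mp ⟨htrip, hgcdpq⟩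
        have hxmn : x = m ^ 2 + n ^ 2 := by
          rcases hmn2 with h' | h'
          · exact h'
          · exfalso; have := sq_nonneg m; have := sq_nonneg n; linarith
        have hkey : (m ^ 2 - n ^ 2) * (m * n) = l ^ 2 ∧ 0 < m ^ 2 - n ^ 2 ∧ 0 < m * n := by
          rcases hmn1 with ⟨hp', hq'⟩ | ⟨hp', hq'⟩
          · have h2k : 2 * ((m ^ 2 - n ^ 2) * (m * n)) = 2 * l ^ 2 := by
              linear_combination hpql - q * hp' - (m ^ 2 - n ^ 2) * hq'
            exact ⟨by linarith, by rw [← hp']; exact hppos, by linarith⟩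
          · have h2k : 2 * ((m ^ 2 - n ^ 2) * (m * n)) = 2 * l ^ 2 := by
              linear_combination hpql - p * hq' - (m ^ 2 - n ^ 2) * hp'
            exact ⟨by linarith, by rw [← hq']; exact hqpos, by linarith⟩
        obtain ⟨hkeq, hkA, hkB⟩ := hkey
        have hcomn : IsCoprime m n := Int.isCoprime_iff_gcd_eq_one.mpr hmn3
        have hmne : m ≠ 0 := by rintro rfl; simp at hkB
        have hnne : n ≠ 0 := by rintro rfl; simp at hkB
        have hm'pos : 0 < |m| := abs_pos.2 hmne
        have hn'pos : 0 < |n| := abs_pos.2 hnne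
        have hm'sq : |m| ^ 2 = m ^ 2 := sq_abs m
        have hn'sq : |n| ^ 2 = n ^ 2 := sq_abs n
        have hm'n' : |m| * |n| = m * n := by rw [← abs_mul]; exact abs_of_pos hkB
        have hcomn' : IsCoprime |m| |n| := by
          rw [Int.isCoprime_iff_gcd_eq_one] at hcomn ⊢
          simpa [Int.gcd, Int.natAbs_abs] using hcomn
        have h1 : IsCoprime (|m| ^ 2 - |n| ^ 2) |m| := by
          have := ((hcomn'.symm.pow_left (m := 2)).neg_left).add_mul_left_left |m|
          rwa [show -(|n| ^ 2) + |m| * |m| = |m| ^ 2 - |n| ^ 2 by ring] at this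
        have h2 : IsCoprime (|m| ^ 2 - |n| ^ 2) |n| := by
          have := (hcomn'.pow_left (m := 2)).add_mul_left_left (-|n|)
          rwa [show |m| ^ 2 + |n| * -|n| = |m| ^ 2 - |n| ^ 2 by ring] at this
        have hco2 : IsCoprime (|m| ^ 2 - |n| ^ 2) (|m| * |n|) := h1.mul_right h2
        have hprod' : (|m| ^ 2 - |n| ^ 2) * (|m| * |n|) = l ^ 2 := by
          rw [hm'sq, hn'sq, hm'n']; exact hkeq
        obtain ⟨c, hc, hceq⟩ := fd_sq_pos hco2 hprod' (by rw [hm'sq, hn'sq]; exact hkA)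
        obtain ⟨d, hd, hdeq⟩ := fd_sq_pos (c := l) hco2.symm (by linear_combination hprod')
          (mul_pos hm'pos hn'pos)
        obtain ⟨e, he, heeq⟩ := fd_sq_pos hcomn' hdeq hm'pos
        obtain ⟨f, hf, hfeq⟩ := fd_sq_pos (c := d) hcomn'.symm (by linear_combination hdeq) hn'pos
        have hnew : f ^ 4 + c ^ 2 = e ^ 4 := by
          linear_combination -hceq + (|m| + e ^ 2) * heeq - (|n| + f ^ 2) * hfeq
        have he_lt : e < x := by
          have h1' : e ≤ e ^ 2 := le_self_pow₀ (by linarith) two_ne_zero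
          have h2' : |m| ≤ |m| ^ 2 := le_self_pow₀ (by linarith) two_ne_zero
          have h3' : (1:ℤ) ≤ |n| ^ 2 := by
            have := pow_le_pow_left₀ (by norm_num : (0:ℤ) ≤ 1)
              (by linarith : (1:ℤ) ≤ |n|) 2
            simpa using this
          linarith [hm'sq, hn'sq, hxmn, heeq]
        exact ih e c f
          (by have := Int.natAbs_lt_natAbs_of_nonneg_of_lt he.le he_lt; omega)
          he hc hf hnew
      · -- z odd
        rcases Int.even_or_odd x with hxe | hxo
        · obtain ⟨a, rfl⟩ := hxe
          obtain ⟨b, rfl⟩ := hzo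
          have h16 : ((2 * (b : ZMod 16) + 1)) ^ 4 + (y : ZMod 16) ^ 2
              = (2 * (a : ZMod 16)) ^ 4 := by
            have := congrArg (fun t : ℤ => (t : ZMod 16)) h
            push_cast at this
            linear_combination this
          exact fd_zmod16 a b y h16
        · obtain ⟨k, hk⟩ := hxo
          obtain ⟨l, hl⟩ := hzo
          set a : ℤ := 2*k^2 + 2*k - (2*l^2 + 2*l) with ha
          set b : ℤ := 2*k^2 + 2*k + (2*l^2 + 2*l) + 1 with hb
          have hA : x ^ 2 - z ^ 2 = 2 * a := by rw [hk, hl]; ring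
          have hB : x ^ 2 + z ^ 2 = 2 * b := by rw [hk, hl]; ring
          have hapos : 0 < a := by linarith
          have hbpos : 0 < b := by nlinarith
          have h4y : (2:ℤ) ^ 2 ∣ y ^ 2 :=
            ⟨a * b, by linear_combination h + (x ^ 2 + z ^ 2) * hA + 2 * a * hB⟩
          have h2y : (2:ℤ) ∣ y := (Int.pow_dvd_pow_iff two_ne_zero).mp h4y
          obtain ⟨y', rfl⟩ := h2y
          have hy' : 0 < y' := by omega
          have hab : a * b = y' ^ 2 := by
            have h4 : 4 * (a * b) = 4 * y' ^ 2 := by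
              linear_combination -h - (x ^ 2 + z ^ 2) * hA - 2 * a * hB
            linarith
          have hA' : a + b = x ^ 2 := by linarith
          have hz2 : z ^ 2 = b - a := by linarith
          obtain ⟨u, v, huv⟩ := hco.pow (n := 2) (m := 2)
          have hcoab : IsCoprime a b :=
            ⟨u - v, u + v, by linear_combination huv + u * hA' - v * hz2⟩
          obtain ⟨p, hp, hap⟩ := fd_sq_pos hcoab hab hapos
          obtain ⟨q, hq0, hbq⟩ := fd_sq_pos (c := y') hcoab.symm (by linear_combination hab) hbpos
          have hq_lt : q < x := by
            have hq2 : q ^ 2 < x ^ 2 := by linarith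
            exact lt_of_pow_lt_pow_left₀ 2 hx.le hq2
          have hnew : p ^ 4 + (x * z) ^ 2 = q ^ 4 := by
            linear_combination (-(z ^ 2)) * hA' + (a + b) * hz2 + (b + q ^ 2) * hbq
              - (a + p ^ 2) * hap
          exact ih q (x * z) p
            (by have := Int.natAbs_lt_natAbs_of_nonneg_of_lt hq0.le hq_lt; omega)
            hq0 (mul_pos hx hz) hp hnew
    · -- gcd ≥ 2 : descend
      obtain ⟨x1, hx1⟩ : (Int.gcd x z : ℤ) ∣ x := Int.gcd_dvd_left x z
      obtain ⟨z1, hz1⟩ : (Int.gcd x z : ℤ) ∣ z := Int.gcd_dvd_right x z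
      set G : ℤ := (Int.gcd x z : ℤ) with hGdef
      have hG : 2 ≤ G := by rw [hGdef]; exact_mod_cast hg2
      have hy2 : (G ^ 2) ^ 2 ∣ y ^ 2 := by
        refine ⟨x1 ^ 4 - z1 ^ 4, ?_⟩
        rw [hx1, hz1] at h; linear_combination h
      have hGy : G ^ 2 ∣ y := (Int.pow_dvd_pow_iff two_ne_zero).mp hy2
      obtain ⟨y1, hy1⟩ := hGy
      have hx1p : 0 < x1 := by
        rcases le_or_gt x1 0 with h' | h'
        · exfalso
          have := mul_nonpos_of_nonneg_of_nonpos (by linarith : (0:ℤ) ≤ G) h'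
          rw [← hx1] at this; linarith
        · exact h'
      have hz1p : 0 < z1 := by
        rcases le_or_gt z1 0 with h' | h'
        · exfalso
          have := mul_nonpos_of_nonneg_of_nonpos (by linarith : (0:ℤ) ≤ G) h'
          rw [← hz1] at this; linarith
        · exact h'
      have hy1p : 0 < y1 := by
        rcases le_or_gt y1 0 with h' | h'
        · exfalso
          have := mul_nonpos_of_nonneg_of_nonpos (by positivity : (0:ℤ) ≤ G ^ 2) h'
          rw [← hy1] at this; linarith
        · exact h'
      have heq1 : z1 ^ 4 + y1 ^ 2 = x1 ^ 4 := by
        have hG0 : G ^ 4 ≠ 0 := by positivity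
        apply mul_left_cancel₀ hG0
        rw [hx1, hz1, hy1] at h
        linear_combination h
      have hlt : x1 < x := by
        have h2' : 2 * x1 ≤ G * x1 := mul_le_mul_of_nonneg_right hG hx1p.le
        rw [← hx1] at h2'; linarith
      exact ih x1 y1 z1
        (by have := Int.natAbs_lt_natAbs_of_nonneg_of_lt hx1p.le hlt; omega)
        hx1p hy1p hz1p heq1

theorem fermat_descent :
    ¬ ∃ x y z : ℤ, 0 < x ∧ 0 < y ∧ 0 < z ∧ y ^ 2 = x ^ 4 - z ^ 4 := by
  rintro ⟨x, y, z, hx, hy, hz, h⟩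
  exact fd_main x.natAbs x y z le_rfl hx hy hz (by linarith)
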